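/- Existence and uniqueness of the dual multiplier: Let A be a nonzero real symmetric positive semidefinite d×d matrix with largest eigenvalue λ_max(A), and let ρ > 0. The function φ(γ) := Tr[((I − γ⁻¹ A)⁻¹ − I)²] is continuous and strictly decreasing on the interval (λ_max(A), ∞), with φ(γ) → +∞ as γ ↓ λ_max(A) and φ(γ) → 0 as γ → ∞. Consequently, the equation Tr[((I − γ⁻¹ A)⁻¹ − I)²] = ρ² has a unique solution γ* in (λ_max(A), ∞). -/

import Mathlib

open Matrix

noncomputable section

/-- The largest eigenvalue of a real symmetric matrix `A`, characterized as the least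
`c` with `c·I − A ⪰ 0`. -/
def lambdaMax {d : ℕ} (A : Matrix (Fin d) (Fin d) ℝ) : ℝ :=
  sInf {c : ℝ | (c • (1 : Matrix (Fin d) (Fin d) ℝ) - A).PosSemidef}

/-- The function `φ(γ) = Tr[((I − γ⁻¹A)⁻¹ − I)²]`. -/
def phiFn {d : ℕ} (A : Matrix (Fin d) (Fin d) ℝ) (γ : ℝ) : ℝ :=
  ((((1 : Matrix (Fin d) (Fin d) ℝ) - γ⁻¹ • A)⁻¹ - 1) ^ 2).trace

lemma conj_trace_eq {d : ℕ} (U M : Matrix (Fin d) (Fin d) ℝ)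
    (hU : U * star U = 1) (hU' : star U * U = 1) (hM : IsUnit M.det) :
    (((U * M * star U)⁻¹ - 1) ^ 2).trace = ((M⁻¹ - 1) ^ 2).trace := by
  have hmul : ∀ X Y : Matrix (Fin d) (Fin d) ℝ,
      (U * X * star U) * (U * Y * star U) = U * (X * Y) * star U := by
    intro X Y
    simp only [mul_assoc, ← mul_assoc (star U) U, hU', one_mul]
  have hinv : (U * M * star U)⁻¹ = U * M⁻¹ * star U := by
    apply Matrix.inv_eq_left_inv
    rw [hmul, Matrix.nonsing_inv_mul _ hM, mul_one, hU]
  have hsub : U * M⁻¹ * star U - 1 = U * (M⁻¹ - 1) * star U := by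
    rw [Matrix.mul_sub U, Matrix.sub_mul, mul_one, hU]
  have hsq : (U * M⁻¹ * star U - 1) ^ 2 = U * ((M⁻¹ - 1) ^ 2) * star U := by
    rw [hsub, sq, sq, hmul]
  rw [hinv, hsq, Matrix.trace_mul_cycle, mul_assoc, ← mul_assoc (star U), hU', one_mul]

lemma diag_form {d : ℕ} (U : Matrix (Fin d) (Fin d) ℝ) (μ : Fin d → ℝ)
    (hU : U * star U = 1) (hU' : star U * U = 1) {γ : ℝ}
    (hγ : ∀ i, 1 - γ⁻¹ * μ i ≠ 0) :
    ((((1 : Matrix (Fin d) (Fin d) ℝ) - γ⁻¹ • (U * diagonal μ * star U))⁻¹ - 1) ^ 2).trace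
      = ∑ i, ((1 - γ⁻¹ * μ i)⁻¹ - 1) ^ 2 := by
  have key : (1 : Matrix (Fin d) (Fin d) ℝ) - γ⁻¹ • (U * diagonal μ * star U)
      = U * diagonal (fun i => 1 - γ⁻¹ * μ i) * star U := by
    have h1 : (1 : Matrix (Fin d) (Fin d) ℝ) = U * 1 * star U := by rw [mul_one, hU]
    have h2 : γ⁻¹ • (U * diagonal μ * star U) = U * (γ⁻¹ • diagonal μ) * star U := by
      simp [Matrix.mul_smul, Matrix.smul_mul]
    rw [h2]
    nth_rewrite 1 [h1]
    rw [← Matrix.sub_mul, ← Matrix.mul_sub]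
    congr 1
    congr 1
    ext i j
    rcases eq_or_ne i j with rfl | h
    · simp [Matrix.one_apply_eq]
    · simp [Matrix.one_apply_ne h, diagonal_apply_ne _ h]
  have hdet : IsUnit (diagonal fun i => 1 - γ⁻¹ * μ i).det := by
    rw [det_diagonal]
    exact (Finset.prod_ne_zero_iff.mpr fun i _ => hγ i).isUnit
  have hinvd : (diagonal fun i => 1 - γ⁻¹ * μ i)⁻¹
      = diagonal (fun i => (1 - γ⁻¹ * μ i)⁻¹) := by
    apply Matrix.inv_eq_left_inv
    rw [diagonal_mul_diagonal]
    have : ∀ i, (1 - γ⁻¹ * μ i)⁻¹ * (1 - γ⁻¹ * μ i) = 1 := fun i => inv_mul_cancel₀ (hγ i)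
    simp only [this, diagonal_one]
  rw [key, conj_trace_eq U _ hU hU' hdet, hinvd]
  have hd2 : diagonal (fun i => (1 - γ⁻¹ * μ i)⁻¹) - 1
      = diagonal (fun i => (1 - γ⁻¹ * μ i)⁻¹ - 1) := by
    ext i j
    rcases eq_or_ne i j with rfl | h
    · simp [Matrix.one_apply_eq]
    · simp [Matrix.one_apply_ne h, diagonal_apply_ne _ h]
  rw [hd2, sq, diagonal_mul_diagonal, trace_diagonal]
  exact Finset.sum_congr rfl fun i _ => (sq _).symm

lemma phiFn_eq {d : ℕ} (A : Matrix (Fin d) (Fin d) ℝ) (hA : A.IsHermitian) {γ : ℝ}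
    (hγ : ∀ i, 1 - γ⁻¹ * hA.eigenvalues i ≠ 0) :
    phiFn A γ = ∑ i, ((1 - γ⁻¹ * hA.eigenvalues i)⁻¹ - 1) ^ 2 := by
  have hU : (hA.eigenvectorUnitary : Matrix (Fin d) (Fin d) ℝ)
      * star (hA.eigenvectorUnitary : Matrix (Fin d) (Fin d) ℝ) = 1 :=
    Unitary.mul_star_self_of_mem (hA.eigenvectorUnitary).2
  have hU' : star (hA.eigenvectorUnitary : Matrix (Fin d) (Fin d) ℝ)
      * (hA.eigenvectorUnitary : Matrix (Fin d) (Fin d) ℝ) = 1 :=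
    Unitary.star_mul_self_of_mem (hA.eigenvectorUnitary).2
  have hAeq : A = (hA.eigenvectorUnitary : Matrix (Fin d) (Fin d) ℝ)
      * diagonal hA.eigenvalues * star (hA.eigenvectorUnitary : Matrix (Fin d) (Fin d) ℝ) := by
    simpa using hA.spectral_theorem
  unfold phiFn
  conv_lhs => rw [hAeq]
  exact diag_form _ _ hU hU' hγ

/-- `lambdaMax` equals the maximum eigenvalue. -/
lemma lambdaMax_eq {d : ℕ} [NeZero d] (A : Matrix (Fin d) (Fin d) ℝ) (hA : A.IsHermitian) :
    lambdaMax A = Finset.univ.sup' Finset.univ_nonempty hA.eigenvalues := by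
  set m := Finset.univ.sup' Finset.univ_nonempty hA.eigenvalues with hm
  have hset : {c : ℝ | (c • (1 : Matrix (Fin d) (Fin d) ℝ) - A).PosSemidef} = Set.Ici m := by
    ext c
    simp only [Set.mem_setOf_eq, Set.mem_Ici]
    constructor
    · intro hpsd
      rw [hm]
      apply Finset.sup'_le
      intro i _
      have hv := hA.mulVec_eigenvectorBasis i
      set v : Fin d → ℝ := ⇑(hA.eigenvectorBasis i) with hvdef
      have hv0 : v ≠ 0 := by
        intro h
        exact (hA.eigenvectorBasis).orthonormal.ne_zero i (by ext j; exact congrFun h j)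
      have hmv : (c • (1 : Matrix (Fin d) (Fin d) ℝ) - A) *ᵥ v
          = (c - hA.eigenvalues i) • v := by
        rw [Matrix.sub_mulVec, Matrix.smul_mulVec, Matrix.one_mulVec, hv, sub_smul]
      have h2 := hpsd.dotProduct_mulVec_nonneg v
      rw [hmv] at h2
      have hdot : dotProduct (star v) ((c - hA.eigenvalues i) • v)
          = (c - hA.eigenvalues i) * dotProduct v v := by
        simp [dotProduct_smul, star_trivial]
      rw [hdot] at h2
      have hvv : 0 < dotProduct v v := by
        have h0 : 0 ≤ dotProduct v v := Finset.sum_nonneg fun j _ => mul_self_nonneg _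
        rcases h0.lt_or_eq with h | h
        · exact h
        · exact absurd ((dotProduct_self_eq_zero).mp h.symm) hv0
      nlinarith
    · intro hc
      have hU : (hA.eigenvectorUnitary : Matrix (Fin d) (Fin d) ℝ)
          * star (hA.eigenvectorUnitary : Matrix (Fin d) (Fin d) ℝ) = 1 :=
        Unitary.mul_star_self_of_mem (hA.eigenvectorUnitary).2
      have hAeq : A = (hA.eigenvectorUnitary : Matrix (Fin d) (Fin d) ℝ)
          * diagonal hA.eigenvalues * star (hA.eigenvectorUnitary : Matrix (Fin d) (Fin d) ℝ) := by
        simpa using hA.spectral_theorem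
      have key : c • (1 : Matrix (Fin d) (Fin d) ℝ) - A
          = (hA.eigenvectorUnitary : Matrix (Fin d) (Fin d) ℝ)
            * diagonal (fun i => c - hA.eigenvalues i)
            * star (hA.eigenvectorUnitary : Matrix (Fin d) (Fin d) ℝ) := by
        set U : Matrix (Fin d) (Fin d) ℝ := (hA.eigenvectorUnitary : Matrix (Fin d) (Fin d) ℝ)
        have h1 : c • (1 : Matrix (Fin d) (Fin d) ℝ) = U * (c • 1) * star U := by
          rw [Matrix.mul_smul, Matrix.smul_mul, mul_one, hU]
        rw [h1]
        conv_lhs => rw [hAeq]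
        rw [← Matrix.sub_mul, ← Matrix.mul_sub]
        congr 2
        ext i j
        rcases eq_or_ne i j with rfl | h
        · simp [Matrix.one_apply_eq]
        · simp [Matrix.one_apply_ne h, diagonal_apply_ne _ h]
      rw [key]
      have hD : (diagonal (fun i => c - hA.eigenvalues i)).PosSemidef := by
        rw [Matrix.posSemidef_diagonal_iff]
        intro i
        have : hA.eigenvalues i ≤ m := Finset.le_sup' _ (Finset.mem_univ i)
        linarith
      have := hD.mul_mul_conjTranspose_same
        (hA.eigenvectorUnitary : Matrix (Fin d) (Fin d) ℝ)
      rwa [Matrix.star_eq_conjTranspose]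
  unfold lambdaMax
  rw [hset, csInf_Ici]

theorem stmt_6 {d : ℕ} (A : Matrix (Fin d) (Fin d) ℝ) (hA : A.PosSemidef) (hA0 : A ≠ 0)
    (ρ : ℝ) (hρ : 0 < ρ) :
    ContinuousOn (phiFn A) (Set.Ioi (lambdaMax A)) ∧
      StrictAntiOn (phiFn A) (Set.Ioi (lambdaMax A)) ∧
      Filter.Tendsto (phiFn A) (nhdsWithin (lambdaMax A) (Set.Ioi (lambdaMax A)))
        Filter.atTop ∧
      Filter.Tendsto (phiFn A) Filter.atTop (nhds 0) ∧
      ∃! γ : ℝ, γ ∈ Set.Ioi (lambdaMax A) ∧ phiFn A γ = ρ ^ 2 := by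
  -- dispose of d = 0
  rcases Nat.eq_zero_or_pos d with rfl | hd
  · exact absurd (Subsingleton.elim A 0) hA0
  haveI : NeZero d := ⟨hd.ne'⟩
  set μ : Fin d → ℝ := hA.1.eigenvalues with hμdef
  set m : ℝ := Finset.univ.sup' Finset.univ_nonempty μ with hmdef
  have hlam : lambdaMax A = m := lambdaMax_eq A hA.1
  have hμ_nonneg : ∀ i, 0 ≤ μ i := fun i => hA.eigenvalues_nonneg i
  have hμ_le : ∀ i, μ i ≤ m := fun i => Finset.le_sup' _ (Finset.mem_univ i)
  obtain ⟨i₀, -, hi₀⟩ := Finset.exists_mem_eq_sup' (Finset.univ_nonempty (α := Fin d)) μ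
  -- m > 0
  have hm_pos : 0 < m := by
    by_contra h
    push_neg at h
    have hall : ∀ i, μ i = 0 := fun i => le_antisymm (le_trans (hμ_le i) h) (hμ_nonneg i)
    apply hA0
    have hAeq : A = (hA.1.eigenvectorUnitary : Matrix (Fin d) (Fin d) ℝ)
        * diagonal μ * star (hA.1.eigenvectorUnitary : Matrix (Fin d) (Fin d) ℝ) := by
      simpa using hA.1.spectral_theorem
    have : diagonal μ = 0 := by
      ext i j
      rcases eq_or_ne i j with rfl | h'
      · simp [hall]
      · simp [diagonal_apply_ne _ h']
    rw [hAeq, this, mul_zero, Matrix.zero_mul]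
  -- on Ioi m, phiFn equals the scalar sum
  set g : Fin d → ℝ → ℝ := fun i γ => (μ i / (γ - μ i)) ^ 2 with hgdef
  have hdenom : ∀ i, ∀ γ ∈ Set.Ioi m, (0:ℝ) < γ - μ i := by
    intro i γ hγ
    have := hμ_le i
    simp only [Set.mem_Ioi] at hγ
    linarith
  have hEq : ∀ γ ∈ Set.Ioi m, phiFn A γ = ∑ i, g i γ := by
    intro γ hγ
    simp only [Set.mem_Ioi] at hγ
    have hγpos : 0 < γ := lt_of_le_of_lt hm_pos.le hγ
    have hne : ∀ i, 1 - γ⁻¹ * μ i ≠ 0 := by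
      intro i
      have h1 : γ⁻¹ * μ i < 1 := by
        rw [inv_mul_lt_iff₀ hγpos, mul_one]
        exact lt_of_le_of_lt (hμ_le i) hγ
      linarith
    rw [phiFn_eq A hA.1 hne]
    apply Finset.sum_congr rfl
    intro i _
    have hd1 : γ - μ i ≠ 0 := (hdenom i γ hγ).ne'
    congr 1
    rw [show 1 - γ⁻¹ * μ i = (γ - μ i) / γ by field_simp, inv_div, div_sub_one hd1]
    congr 1
    ring
  -- continuity
  have hcont : ContinuousOn (phiFn A) (Set.Ioi m) := by
    apply ContinuousOn.congr (f := fun γ => ∑ i, g i γ) ?_ hEq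
    apply continuousOn_finset_sum
    intro i _
    apply ContinuousOn.pow
    apply ContinuousOn.div continuousOn_const (by fun_prop)
    exact fun γ hγ => (hdenom i γ hγ).ne'
  -- strict antitonicity
  have hanti : StrictAntiOn (phiFn A) (Set.Ioi m) := by
    intro x hx y hy hxy
    rw [hEq x hx, hEq y hy]
    apply Finset.sum_lt_sum
    · intro i _
      rcases (hμ_nonneg i).lt_or_eq with hpos | hzero
      · apply pow_le_pow_left₀ (div_nonneg (hμ_nonneg i) (hdenom i y hy).le)
        apply div_le_div_of_nonneg_left (hμ_nonneg i) (hdenom i x hx)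
        have := hdenom i x hx
        simp only [Set.mem_Ioi] at hx hy
        linarith
      · simp [hgdef, ← hzero]
    · refine ⟨i₀, Finset.mem_univ _, ?_⟩
      have h1 : μ i₀ / (y - μ i₀) < μ i₀ / (x - μ i₀) := by
        apply div_lt_div_of_pos_left (hi₀ ▸ hm_pos) (hdenom i₀ x hx)
        simp only [Set.mem_Ioi] at hx hy
        linarith [hdenom i₀ x hx]
      apply pow_lt_pow_left₀ h1 (div_nonneg (hμ_nonneg i₀) (hdenom i₀ y hy).le)
      norm_num
  -- tendsto atTop at m⁺
  have htop : Filter.Tendsto (phiFn A) (nhdsWithin m (Set.Ioi m)) Filter.atTop := by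
    have hterm : Filter.Tendsto (fun γ => g i₀ γ) (nhdsWithin m (Set.Ioi m)) Filter.atTop := by
      have h1 : Filter.Tendsto (fun γ : ℝ => γ - m) (nhdsWithin m (Set.Ioi m))
          (nhdsWithin 0 (Set.Ioi 0)) := by
        apply tendsto_nhdsWithin_of_tendsto_nhds_of_eventually_within
        · simpa using (((continuous_sub_right m).tendsto m).mono_left nhdsWithin_le_nhds)
        · filter_upwards [self_mem_nhdsWithin] with γ hγ
          simp only [Set.mem_Ioi] at hγ ⊢
          linarith
      have h2 : Filter.Tendsto (fun γ : ℝ => (γ - m)⁻¹) (nhdsWithin m (Set.Ioi m))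
          Filter.atTop := tendsto_inv_nhdsGT_zero.comp h1
      have h3 : Filter.Tendsto (fun γ : ℝ => m * (γ - m)⁻¹) (nhdsWithin m (Set.Ioi m))
          Filter.atTop := h2.const_mul_atTop hm_pos
      have h4 : Filter.Tendsto (fun γ : ℝ => (m * (γ - m)⁻¹) ^ 2)
          (nhdsWithin m (Set.Ioi m)) Filter.atTop :=
        (Filter.tendsto_pow_atTop two_ne_zero).comp h3
      have hmi₀ : m = μ i₀ := by rw [hmdef, hi₀]
      refine h4.congr ?_
      intro γ
      simp [hgdef, div_eq_mul_inv, ← hmi₀]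
    apply Filter.tendsto_atTop_mono' _ _ hterm
    filter_upwards [self_mem_nhdsWithin] with γ hγ
    rw [hEq γ hγ]
    exact Finset.single_le_sum (f := fun i => g i γ) (fun i _ => by positivity)
      (Finset.mem_univ i₀)
  -- tendsto 0 at atTop
  have hzero : Filter.Tendsto (phiFn A) Filter.atTop (nhds 0) := by
    have hsum : Filter.Tendsto (fun γ => ∑ i, g i γ) Filter.atTop (nhds 0) := by
      have hterm : ∀ i : Fin d, Filter.Tendsto (fun γ => g i γ) Filter.atTop (nhds 0) := by
        intro i
        have h1 : Filter.Tendsto (fun γ : ℝ => γ - μ i) Filter.atTop Filter.atTop :=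
          Filter.tendsto_atTop_add_const_right _ _ Filter.tendsto_id
        have h2 : Filter.Tendsto (fun γ : ℝ => (γ - μ i)⁻¹) Filter.atTop (nhds 0) :=
          Filter.Tendsto.comp tendsto_inv_atTop_zero h1
        have h3 : Filter.Tendsto (fun γ : ℝ => μ i * (γ - μ i)⁻¹) Filter.atTop (nhds 0) := by
          simpa using h2.const_mul (μ i)
        have h4 : Filter.Tendsto (fun γ : ℝ => (μ i * (γ - μ i)⁻¹) ^ 2) Filter.atTop
            (nhds ((0:ℝ) ^ 2)) := h3.pow 2
        simp only [ne_eq, OfNat.ofNat_ne_zero, not_false_eq_true, zero_pow] at h4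
        refine h4.congr ?_
        intro γ
        simp [hgdef, div_eq_mul_inv]
      have := tendsto_finset_sum Finset.univ (fun i _ => hterm i)
      simpa using this
    apply hsum.congr'
    filter_upwards [Filter.eventually_gt_atTop m] with γ hγ
    exact (hEq γ hγ).symm
  rw [hlam]
  refine ⟨hcont, hanti, htop, hzero, ?_⟩
  -- existence
  have hρ2 : (0:ℝ) < ρ ^ 2 := by positivity
  obtain ⟨a, haρ, ha⟩ := ((htop.eventually (Filter.eventually_gt_atTop (ρ ^ 2))).and
    self_mem_nhdsWithin).exists
  obtain ⟨b, hbρ, hba⟩ := ((hzero.eventually_lt_const hρ2).and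
    (Filter.eventually_gt_atTop a)).exists
  have hb : b ∈ Set.Ioi m := lt_trans (Set.mem_Ioi.mp ha) hba
  have hIcc : Set.Icc a b ⊆ Set.Ioi m := fun x hx => lt_of_lt_of_le ha hx.1
  have hsub := intermediate_value_Icc' hba.le (hcont.mono hIcc)
  have hmem : ρ ^ 2 ∈ Set.Icc (phiFn A b) (phiFn A a) := ⟨hbρ.le, haρ.le⟩
  obtain ⟨γ, hγab, hγeq⟩ := hsub hmem
  refine ⟨γ, ⟨hIcc hγab, hγeq⟩, ?_⟩
  rintro γ' ⟨hγ'mem, hγ'eq⟩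
  exact hanti.injOn hγ'mem (hIcc hγab) (hγ'eq.trans hγeq.symm)
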